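/- An Archimedean vector lattice F has the projection property if and only if for every order bounded disjoint set G ⊆ F⁺ there exists g ∈ G^{dd} with h ≤ g for all h ∈ G. In particular, if every order bounded disjoint set in F has a supremum, then F has the projection property. -/

import Mathlib

open Pointwise

variable {F : Type*} [Lattice F] [AddCommGroup F] [Module ℝ F]
  [CovariantClass F F (· + ·) (· ≤ ·)] [PosSMulMono ℝ F]

/-- A subset of a vector lattice is solid if it is nonempty and `|f| ≤ |e|`, `e ∈ E`
imply `f ∈ E`. -/
def Solid (E : Set F) : Prop :=
  E.Nonempty ∧ ∀ f e : F, e ∈ E → |f| ≤ |e| → f ∈ E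

/-- An ideal of a vector lattice: a solid linear subspace. -/
def IsIdeal (E : Set F) : Prop :=
  (0 : F) ∈ E ∧ (∀ x y : F, x ∈ E → y ∈ E → x + y ∈ E) ∧
    (∀ (c : ℝ) (x : F), x ∈ E → c • x ∈ E) ∧ Solid E

/-- The positive part of a set: its elements lying in the positive cone. -/
def posPart (E : Set F) : Set F := E ∩ {x : F | 0 ≤ x}

/-- The disjoint complement of a set. -/
def dComp (G : Set F) : Set F := {f : F | ∀ g ∈ G, |f| ⊓ |g| = 0}

/-- The principal ideal generated by `|e|`. -/
def pIdeal (e : F) : Set F := {f : F | ∃ α : ℝ, 0 ≤ α ∧ |f| ≤ α • |e|}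

namespace Stmt14Aux

set_option linter.unusedSectionVars false

lemma inf_nonneg'' {a b : F} (ha : 0 ≤ a) (hb : 0 ≤ b) : 0 ≤ a ⊓ b := le_inf ha hb

lemma add_inf_le {a b c : F} (ha : 0 ≤ a) (hb : 0 ≤ b) (hc : 0 ≤ c) :
    (a + b) ⊓ c ≤ a ⊓ c + b ⊓ c := by
  have h1 : a ⊓ c + b ⊓ c = ((a + (b ⊓ c)) ⊓ (c + (b ⊓ c))) := inf_add ..
  rw [h1, add_inf, add_inf]
  refine le_inf (le_inf inf_le_left ?_) (le_inf ?_ ?_)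
  · exact inf_le_right.trans (le_add_of_nonneg_left ha)
  · exact inf_le_right.trans (le_add_of_nonneg_right hb)
  · exact inf_le_right.trans (le_add_of_nonneg_right hc)

lemma disj_add {a b c : F} (ha : 0 ≤ a) (hb : 0 ≤ b) (hc : 0 ≤ c)
    (h1 : a ⊓ c = 0) (h2 : b ⊓ c = 0) : (a + b) ⊓ c = 0 := by
  refine le_antisymm ?_ (inf_nonneg'' (add_nonneg ha hb) hc)
  calc (a + b) ⊓ c ≤ a ⊓ c + b ⊓ c := add_inf_le ha hb hc
    _ = 0 := by rw [h1, h2, add_zero]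

lemma nsmul_inf_le (n : ℕ) {a c : F} (ha : 0 ≤ a) (hc : 0 ≤ c) :
    (n • a) ⊓ c ≤ n • (a ⊓ c) := by
  induction n with
  | zero => simpa using inf_le_left
  | succ n ih =>
      calc ((n + 1) • a) ⊓ c = (n • a + a) ⊓ c := by rw [succ_nsmul]
        _ ≤ (n • a) ⊓ c + a ⊓ c := add_inf_le (nsmul_nonneg ha n) ha hc
        _ ≤ n • (a ⊓ c) + a ⊓ c := add_le_add_left ih _
        _ = (n + 1) • (a ⊓ c) := (succ_nsmul _ n).symm

lemma disj_nsmul (n : ℕ) {a c : F} (ha : 0 ≤ a) (hc : 0 ≤ c) (h : a ⊓ c = 0) :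
    (n • a) ⊓ c = 0 := by
  refine le_antisymm ?_ (inf_nonneg'' (nsmul_nonneg ha n) hc)
  calc (n • a) ⊓ c ≤ n • (a ⊓ c) := nsmul_inf_le n ha hc
    _ = 0 := by rw [h, smul_zero]

lemma disj_comm' {a c : F} (h : a ⊓ c = 0) : c ⊓ a = 0 := by rwa [inf_comm] at h

lemma disj_nsmul_nsmul (m n : ℕ) {a c : F} (ha : 0 ≤ a) (hc : 0 ≤ c) (h : a ⊓ c = 0) :
    (m • a) ⊓ (n • c) = 0 := by
  have h1 : a ⊓ (n • c) = 0 := disj_comm' (disj_nsmul n hc ha (disj_comm' h))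
  exact disj_nsmul m ha (nsmul_nonneg hc n) h1

lemma add_le_of_disjoint {x y a : F} (hxy : x ⊓ y = 0) (h1 : x ≤ a) (h2 : y ≤ a) :
    x + y ≤ a := by
  have h : x + y = x ⊔ y := by rw [← inf_add_sup x y, hxy, zero_add]
  rw [h]; exact sup_le h1 h2

lemma sum_nonneg' {x : ℕ → F} (hx : ∀ n, 0 ≤ x n) (m : ℕ) :
    (0 : F) ≤ ∑ n ∈ Finset.range m, x n := by
  induction m with
  | zero => simp
  | succ m ih => rw [Finset.sum_range_succ]; exact add_nonneg ih (hx m)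

lemma sum_disj {x : ℕ → F} (hx : ∀ n, 0 ≤ x n) {c : F} (hc : 0 ≤ c) (m : ℕ)
    (h : ∀ n, n < m → x n ⊓ c = 0) : (∑ n ∈ Finset.range m, x n) ⊓ c = 0 := by
  induction m with
  | zero =>
      rw [Finset.range_zero, Finset.sum_empty]
      exact le_antisymm inf_le_left (le_inf le_rfl hc)
  | succ m ih =>
      rw [Finset.sum_range_succ]
      have hs : (0 : F) ≤ ∑ n ∈ Finset.range m, x n := sum_nonneg' hx m
      exact disj_add hs (hx m) hc
        (ih fun n hn => h n (hn.trans (Nat.lt_succ_self m))) (h m (Nat.lt_succ_self m))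

lemma sum_le_dom {x : ℕ → F} (hx : ∀ n, 0 ≤ x n)
    (hd : ∀ m n, m ≠ n → x m ⊓ x n = 0) {a : F} (ha : ∀ n, x n ≤ a) (m : ℕ) :
    (∑ n ∈ Finset.range m, x n) ≤ a := by
  induction m with
  | zero =>
      simpa using (hx 0).trans (ha 0)
  | succ m ih =>
      rw [Finset.sum_range_succ]
      refine add_le_of_disjoint ?_ ih (ha m)
      exact sum_disj hx (hx m) m fun n hn => hd n m (Nat.ne_of_lt hn)

lemma sub_inf' (a b c : F) : a - b ⊓ c = (a - b) ⊔ (a - c) := by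
  rw [sub_eq_add_neg, neg_inf, add_sup, ← sub_eq_add_neg, ← sub_eq_add_neg]

lemma self_sub_inf (x y : F) : x - x ⊓ y = (x - y) ⊔ 0 := by
  rw [sub_inf', sub_self, sup_comm]

lemma abs_smul_le (c : ℝ) (x : F) : |c • x| ≤ |c| • |x| := by
  refine abs_le'.mpr ⟨?_, ?_⟩
  · rcases le_total 0 c with hc | hc
    · rw [abs_of_nonneg hc]; exact smul_le_smul_of_nonneg_left (le_abs_self x) hc
    · rw [abs_of_nonpos hc, ← neg_smul_neg c x]
      exact smul_le_smul_of_nonneg_left (neg_le_abs x) (neg_nonneg.mpr hc)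
  · rw [← neg_smul]
    rcases le_total 0 (-c) with hc | hc
    · rw [← abs_neg c, abs_of_nonneg hc]
      exact smul_le_smul_of_nonneg_left (le_abs_self x) hc
    · rw [← abs_neg c, abs_of_nonpos hc, ← neg_smul_neg (-c) x]
      exact smul_le_smul_of_nonneg_left (neg_le_abs x) (neg_nonneg.mpr hc)

lemma nsmul_abs_le (c : ℝ) (n : ℕ) (hcn : |c| ≤ (n : ℝ)) (x : F) : |c • x| ≤ n • |x| := by
  refine (abs_smul_le c x).trans ?_
  rw [← Nat.cast_smul_eq_nsmul ℝ n |x|]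
  have h0 : (0 : F) ≤ ((n : ℝ) - |c|) • |x| := by
    have h1 : ((n : ℝ) - |c|) • (0 : F) ≤ ((n : ℝ) - |c|) • |x| :=
      smul_le_smul_of_nonneg_left (abs_nonneg x) (by linarith)
    simpa using h1
  rw [sub_smul] at h0
  exact sub_nonneg.mp h0

-- dComp basic lemmas
lemma dComp_antitone {A B : Set F} (h : A ⊆ B) : dComp B ⊆ dComp A :=
  fun x hx g hg => hx g (h hg)

lemma subset_dComp_dComp (S : Set F) : S ⊆ dComp (dComp S) := by
  intro x hx h hh
  rw [inf_comm]
  exact hh x hx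

lemma dComp_dComp_dComp (S : Set F) : dComp (dComp (dComp S)) = dComp S :=
  subset_antisymm (dComp_antitone (subset_dComp_dComp S)) (subset_dComp_dComp (dComp S))

lemma zero_mem_dComp (S : Set F) : (0 : F) ∈ dComp S := by
  intro g hg
  rw [abs_zero]
  exact inf_eq_left.mpr (abs_nonneg g)

lemma isIdeal_dComp (S : Set F) : IsIdeal (dComp S) := by
  refine ⟨zero_mem_dComp S, ?_, ?_, ⟨0, zero_mem_dComp S⟩, ?_⟩
  · intro x y hx hy g hg
    refine le_antisymm ?_ (inf_nonneg'' (abs_nonneg _) (abs_nonneg _))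
    calc |x + y| ⊓ |g| ≤ (|x| + |y|) ⊓ |g| := inf_le_inf_right _ (abs_add_le x y)
      _ ≤ |x| ⊓ |g| + |y| ⊓ |g| := add_inf_le (abs_nonneg x) (abs_nonneg y) (abs_nonneg g)
      _ = 0 := by rw [hx g hg, hy g hg, add_zero]
  · intro c x hx g hg
    obtain ⟨n, hn⟩ := exists_nat_ge |c|
    refine le_antisymm ?_ (inf_nonneg'' (abs_nonneg _) (abs_nonneg _))
    calc |c • x| ⊓ |g| ≤ (n • |x|) ⊓ |g| := inf_le_inf_right _ (nsmul_abs_le c n hn x)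
      _ ≤ n • (|x| ⊓ |g|) := nsmul_inf_le n (abs_nonneg x) (abs_nonneg g)
      _ = 0 := by rw [hx g hg, smul_zero]
  · intro f e he hfe g hg
    refine le_antisymm ?_ (inf_nonneg'' (abs_nonneg _) (abs_nonneg _))
    calc |f| ⊓ |g| ≤ |e| ⊓ |g| := inf_le_inf_right _ hfe
      _ = 0 := he g hg

lemma dComp_sub_mem {S : Set F} {x y : F} (hx : x ∈ dComp S) (hy : y ∈ dComp S) :
    x - y ∈ dComp S := by
  obtain ⟨-, hadd, hsmul, -⟩ := isIdeal_dComp (F := F) S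
  have : x - y = x + (-1 : ℝ) • y := by rw [neg_one_smul]; abel
  rw [this]
  exact hadd _ _ hx (hsmul _ _ hy)

/-- The key order-theoretic inequality: `(K • ((g-A)⁺)) ⊓ A ≤ g` for `0 ≤ g, A`. -/
lemma key_inf {g A : F} (hg : 0 ≤ g) (hA : 0 ≤ A) (K : ℕ) :
    (K • ((g - A) ⊔ 0)) ⊓ A ≤ g := by
  set z : F := (g - A) ⊔ 0 with hz
  set p : F := (A - g) ⊔ 0 with hp
  have hz0 : 0 ≤ z := le_sup_right
  have hp0 : 0 ≤ p := le_sup_right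
  have hpz : p ⊓ z = 0 := by
    have h := posPart_inf_negPart_eq_zero (g - A)
    have h2 : (g - A)⁻ = p := by rw [hp, negPart_def, neg_sub]
    have h3 : (g - A)⁺ = z := rfl
    rw [h3, h2] at h
    rwa [inf_comm]
  have hKzp : (K • z) ⊓ p = 0 := disj_nsmul K hz0 hp0 (disj_comm' hpz)
  have hAle : A ≤ g + p := by
    have : g + p = A ⊔ g := by rw [hp, add_sup, add_sub_cancel, add_zero, sup_comm]
    rw [this]; exact le_sup_left
  calc (K • z) ⊓ A ≤ (K • z) ⊓ (g + p) := inf_le_inf_left _ hAle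
    _ = (g + p) ⊓ (K • z) := inf_comm ..
    _ ≤ g ⊓ (K • z) + p ⊓ (K • z) := add_inf_le hg hp0 (nsmul_nonneg hz0 K)
    _ ≤ g + 0 := add_le_add inf_le_left (le_of_eq (by rw [inf_comm]; exact hKzp))
    _ = g := add_zero g

lemma inf_concave {f a c : F} (hc : 0 ≤ c) :
    f ⊓ (a + c + c) + f ⊓ a ≤ f ⊓ (a + c) + f ⊓ (a + c) := by
  have h1 : f ⊓ (a + c) + f ⊓ (a + c)
      = ((f + f) ⊓ ((a + c) + f)) ⊓ ((f + (a + c)) ⊓ ((a + c) + (a + c))) := by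
    calc f ⊓ (a + c) + f ⊓ (a + c)
        = (f ⊓ (a + c) + f) ⊓ (f ⊓ (a + c) + (a + c)) := add_inf ..
      _ = ((f + f) ⊓ ((a + c) + f)) ⊓ ((f + (a + c)) ⊓ ((a + c) + (a + c))) := by
          rw [inf_add, inf_add]
  rw [h1]
  have hS1 : f ⊓ (a + c + c) + f ⊓ a ≤ f + f := add_le_add inf_le_left inf_le_left
  have hS2 : f ⊓ (a + c + c) + f ⊓ a ≤ f + a := add_le_add inf_le_left inf_le_right
  have hS3 : f ⊓ (a + c + c) + f ⊓ a ≤ (a + c + c) + a := add_le_add inf_le_right inf_le_right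
  refine le_inf (le_inf hS1 ?_) (le_inf ?_ ?_)
  · refine hS2.trans ?_
    calc f + a = a + f := add_comm f a
      _ ≤ (a + c) + f := add_le_add_left (le_add_of_nonneg_right hc) f
  · refine hS2.trans (add_le_add_right (le_add_of_nonneg_right hc) f)
  · refine hS3.trans (le_of_eq (by abel))


lemma sum_le_sum' {x y : ℕ → F} : ∀ m : ℕ, (∀ n, n < m → x n ≤ y n) →
    (∑ n ∈ Finset.range m, x n) ≤ ∑ n ∈ Finset.range m, y n
  | 0, _ => by simp
  | (m + 1), h => by
      rw [Finset.sum_range_succ, Finset.sum_range_succ]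
      exact add_le_add (sum_le_sum' m fun n hn => h n (hn.trans (Nat.lt_succ_self m)))
        (h m (Nat.lt_succ_self m))

/-! ### The sequence machinery for the principal projection property -/

def pfn (f u : F) (m : ℕ) : F := f ⊓ (m • u)
def dfn (f u : F) (m : ℕ) : F := pfn f u (m + 1) - pfn f u m
def efn (f u : F) (n : ℕ) : F := dfn f u n - dfn f u (n + 1)
def wfn (f u : F) (n : ℕ) : F := (n + 1) • efn f u n
def zfn (f u : F) (m : ℕ) : F := (f - m • u) ⊔ 0

section seq

variable {f u : F}

lemma pfn_zero (hf : 0 ≤ f) : pfn f u 0 = 0 := by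
  show f ⊓ ((0 : ℕ) • u) = 0
  rw [zero_nsmul]
  exact inf_eq_right.mpr hf

lemma pfn_le_f (m : ℕ) : pfn f u m ≤ f := inf_le_left

lemma pfn_le_mu (m : ℕ) : pfn f u m ≤ m • u := inf_le_right

lemma pfn_mono (hu : 0 ≤ u) (m : ℕ) : pfn f u m ≤ pfn f u (m + 1) :=
  inf_le_inf_left f (by rw [succ_nsmul]; exact le_add_of_nonneg_right hu)

lemma dfn_nonneg (hu : 0 ≤ u) (m : ℕ) : 0 ≤ dfn f u m := sub_nonneg.mpr (pfn_mono hu m)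

lemma dfn_le_u (hu : 0 ≤ u) (m : ℕ) : dfn f u m ≤ u := by
  have h2 : pfn f u (m + 1) - u = (f - u) ⊓ (m • u) := by
    show f ⊓ ((m + 1) • u) - u = (f - u) ⊓ (m • u)
    rw [succ_nsmul, sub_eq_add_neg, inf_add, ← sub_eq_add_neg, ← sub_eq_add_neg,
      add_sub_cancel_right]
  have h1 : pfn f u (m + 1) - u ≤ pfn f u m := by
    rw [h2]
    exact inf_le_inf_right _ (sub_le_self f hu)
  have h3 : pfn f u (m + 1) ≤ pfn f u m + u := sub_le_iff_le_add.mp h1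
  show pfn f u (m + 1) - pfn f u m ≤ u
  exact sub_le_iff_le_add'.mpr h3

lemma dfn_antitone_succ (hu : 0 ≤ u) (m : ℕ) : dfn f u (m + 1) ≤ dfn f u m := by
  show pfn f u (m + 1 + 1) - pfn f u (m + 1) ≤ pfn f u (m + 1) - pfn f u m
  rw [sub_le_sub_iff]
  have h := inf_concave (f := f) (a := m • u) (c := u) hu
  have e1 : (m + 1 + 1) • u = m • u + u + u := by rw [succ_nsmul, succ_nsmul]
  have e2 : (m + 1) • u = m • u + u := succ_nsmul u m
  show f ⊓ ((m + 1 + 1) • u) + f ⊓ (m • u) ≤ f ⊓ ((m + 1) • u) + f ⊓ ((m + 1) • u)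
  rw [e1, e2]
  exact h

lemma dfn_antitone (hu : 0 ≤ u) : Antitone (dfn f u) := antitone_nat_of_succ_le (dfn_antitone_succ hu)

lemma sum_dfn (hf : 0 ≤ f) (m : ℕ) : (∑ n ∈ Finset.range m, dfn f u n) = pfn f u m := by
  have h := Finset.sum_range_sub (pfn f u) m
  rw [pfn_zero hf, sub_zero] at h
  exact h

lemma nsmul_dfn_le_f (hf : 0 ≤ f) (hu : 0 ≤ u) (m : ℕ) : m • dfn f u m ≤ f := by
  have h1 : m • dfn f u m = ∑ _n ∈ Finset.range m, dfn f u m := by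
    rw [Finset.sum_const, Finset.card_range]
  rw [h1]
  refine (sum_le_sum' m (fun n hn => dfn_antitone hu (le_of_lt hn))).trans ?_
  rw [sum_dfn hf]
  exact pfn_le_f m

lemma zfn_nonneg (m : ℕ) : 0 ≤ zfn f u m := le_sup_right

lemma f_sub_pfn (m : ℕ) : f - pfn f u m = zfn f u m := self_sub_inf f (m • u)

lemma dfn_le_zfn (m : ℕ) : dfn f u m ≤ zfn f u m := by
  rw [← f_sub_pfn]
  exact sub_le_sub_right (pfn_le_f (m + 1)) _

lemma zfn_inf_u_le_dfn (hu : 0 ≤ u) (m : ℕ) : zfn f u m ⊓ u ≤ dfn f u m := by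
  have key : zfn f u m ⊓ u + pfn f u m ≤ pfn f u (m + 1) := by
    have e1 : zfn f u m ⊓ u + pfn f u m = (zfn f u m + pfn f u m) ⊓ (u + pfn f u m) :=
      inf_add ..
    have e2 : zfn f u m + pfn f u m = (f - m • u + pfn f u m) ⊔ pfn f u m := by
      show ((f - m • u) ⊔ 0) + pfn f u m = _
      rw [sup_add, zero_add]
    have h3 : zfn f u m + pfn f u m ≤ f := by
      rw [e2]
      refine sup_le ?_ (pfn_le_f m)
      calc f - m • u + pfn f u m ≤ f - m • u + m • u := add_le_add_right (pfn_le_mu m) _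
        _ = f := sub_add_cancel f (m • u)
    have h4 : u + pfn f u m ≤ (m + 1) • u := by
      calc u + pfn f u m ≤ u + m • u := add_le_add_right (pfn_le_mu m) u
        _ = (m + 1) • u := by rw [succ_nsmul, add_comm]
    rw [e1]
    exact le_inf (inf_le_left.trans h3) (inf_le_right.trans h4)
  show zfn f u m ⊓ u ≤ pfn f u (m + 1) - pfn f u m
  exact le_sub_iff_add_le.mpr key

lemma efn_nonneg (hu : 0 ≤ u) (n : ℕ) : 0 ≤ efn f u n := sub_nonneg.mpr (dfn_antitone_succ hu n)

lemma efn_le_dfn (hu : 0 ≤ u) (n : ℕ) : efn f u n ≤ dfn f u n := sub_le_self _ (dfn_nonneg hu (n + 1))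

lemma efn_le_u (hu : 0 ≤ u) (n : ℕ) : efn f u n ≤ u := (efn_le_dfn hu n).trans (dfn_le_u hu n)

lemma efn_le_upper (hu : 0 ≤ u) (n : ℕ) : efn f u n ≤ ((n + 1 + 1) • u - f) ⊔ 0 := by
  have h1 : pfn f u (n + 1 + 1) - (n + 1) • u ≤ dfn f u (n + 1) := by
    show _ ≤ pfn f u (n + 1 + 1) - pfn f u (n + 1)
    exact sub_le_sub_left (pfn_le_mu (n + 1)) _
  have h2 : efn f u n ≤ u - dfn f u (n + 1) := sub_le_sub_right (dfn_le_u hu n) _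
  have h3 : u - dfn f u (n + 1) ≤ u - (pfn f u (n + 1 + 1) - (n + 1) • u) :=
    sub_le_sub_left h1 u
  have h4 : u - (pfn f u (n + 1 + 1) - (n + 1) • u)
      = (n + 1 + 1) • u - pfn f u (n + 1 + 1) := by
    rw [succ_nsmul u (n + 1)]
    abel
  have h5 : (n + 1 + 1) • u - pfn f u (n + 1 + 1) = ((n + 1 + 1) • u - f) ⊔ 0 := by
    show (n + 1 + 1) • u - f ⊓ ((n + 1 + 1) • u) = _
    rw [inf_comm, self_sub_inf]
  exact h2.trans (h3.trans (le_of_eq (h4.trans h5)))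

lemma efn_disj (hu : 0 ≤ u) (n m : ℕ) (hnm : n + 1 + 1 ≤ m) : efn f u n ⊓ efn f u m = 0 := by
  refine le_antisymm ?_ (inf_nonneg'' (efn_nonneg hu n) (efn_nonneg hu m))
  have h1 : efn f u n ≤ (m • u - f) ⊔ 0 := by
    refine (efn_le_upper hu n).trans ?_
    exact sup_le_sup_right (sub_le_sub_right (nsmul_le_nsmul_left hu hnm) f) 0
  have h2 : efn f u m ≤ (f - m • u) ⊔ 0 := (efn_le_dfn hu m).trans (dfn_le_zfn m)
  calc efn f u n ⊓ efn f u m ≤ ((m • u - f) ⊔ 0) ⊓ ((f - m • u) ⊔ 0) := inf_le_inf h1 h2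
    _ = 0 := by
        have hneg : (m • u - f) ⊔ 0 = (f - m • u)⁻ := by rw [negPart_def, neg_sub]
        have hpos : (f - m • u) ⊔ 0 = (f - m • u)⁺ := rfl
        rw [hneg, hpos, inf_comm]
        exact posPart_inf_negPart_eq_zero _

lemma wfn_nonneg (hu : 0 ≤ u) (n : ℕ) : 0 ≤ wfn f u n := nsmul_nonneg (efn_nonneg hu n) _

lemma wfn_le (hf : 0 ≤ f) (hu : 0 ≤ u) (n : ℕ) : wfn f u n ≤ f + u := by
  show (n + 1) • efn f u n ≤ f + u
  rw [succ_nsmul]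
  exact add_le_add ((nsmul_le_nsmul_right (efn_le_dfn hu n) n).trans (nsmul_dfn_le_f hf hu n))
    (efn_le_u hu n)

lemma wfn_disj (hu : 0 ≤ u) (n m : ℕ) (hnm : n + 1 + 1 ≤ m) : wfn f u n ⊓ wfn f u m = 0 :=
  disj_nsmul_nsmul (n + 1) (m + 1) (efn_nonneg hu n) (efn_nonneg hu m) (efn_disj hu n m hnm)

lemma wfn_disj' (hu : 0 ≤ u) (n m : ℕ) (hnm : n + 1 + 1 ≤ m ∨ m + 1 + 1 ≤ n) :
    wfn f u n ⊓ wfn f u m = 0 := by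
  rcases hnm with h | h
  · exact wfn_disj hu n m h
  · exact disj_comm' (wfn_disj hu m n h)

lemma sum_wfn (hf : 0 ≤ f) (hu : 0 ≤ u) (m : ℕ) : (∑ n ∈ Finset.range m, wfn f u n) + m • dfn f u m = pfn f u m := by
  induction m with
  | zero => rw [Finset.range_zero, Finset.sum_empty, zero_nsmul, add_zero, pfn_zero hf]
  | succ m ih =>
      rw [Finset.sum_range_succ]
      have e1 : wfn f u m + (m + 1) • dfn f u (m + 1) = (m + 1) • dfn f u m := by
        show (m + 1) • efn f u m + (m + 1) • dfn f u (m + 1) = (m + 1) • dfn f u m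
        rw [← nsmul_add]
        congr 1
        show dfn f u m - dfn f u (m + 1) + dfn f u (m + 1) = dfn f u m
        exact sub_add_cancel _ _
      calc (∑ n ∈ Finset.range m, wfn f u n) + wfn f u m + (m + 1) • dfn f u (m + 1)
          = (∑ n ∈ Finset.range m, wfn f u n) + ((m + 1) • dfn f u m) := by
            rw [add_assoc, e1]
        _ = (∑ n ∈ Finset.range m, wfn f u n) + (m • dfn f u m + dfn f u m) := by
            rw [succ_nsmul]
        _ = ((∑ n ∈ Finset.range m, wfn f u n) + m • dfn f u m) + dfn f u m := by
            rw [add_assoc]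
        _ = pfn f u m + dfn f u m := by rw [ih]
        _ = pfn f u (m + 1) := by
            show pfn f u m + (pfn f u (m + 1) - pfn f u m) = pfn f u (m + 1)
            rw [add_sub_cancel]

end seq

lemma sum_range_mono {x : ℕ → F} (hx : ∀ n, 0 ≤ x n) {m M : ℕ} (h : m ≤ M) :
    ∑ n ∈ Finset.range m, x n ≤ ∑ n ∈ Finset.range M, x n := by
  induction M, h using Nat.le_induction with
  | base => exact le_rfl
  | succ M hM ih =>
      rw [Finset.sum_range_succ]
      exact ih.trans (le_add_of_nonneg_right (hx M))

lemma sum_split_parity (x : ℕ → F) (m : ℕ) :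
    (∑ n ∈ Finset.range (2 * m), x n)
      = (∑ k ∈ Finset.range m, x (2 * k)) + (∑ k ∈ Finset.range m, x (2 * k + 1)) := by
  induction m with
  | zero => simp
  | succ m ih =>
      have e1 : 2 * (m + 1) = (2 * m) + 1 + 1 := by ring
      rw [e1, Finset.sum_range_succ, Finset.sum_range_succ, ih, Finset.sum_range_succ,
        Finset.sum_range_succ]
      abel

/-- Principal projection property from the domination hypothesis. -/
lemma ppp (hArch : ∀ f g : F, 0 ≤ f → (∀ n : ℕ, n • g ≤ f) → g ≤ 0)
    (hyp : ∀ G : Set F, G ⊆ {x : F | 0 ≤ x} → (∃ f : F, ∀ g ∈ G, g ≤ f) →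
      (∀ g ∈ G, ∀ h ∈ G, g ≠ h → g ⊓ h = 0) →
      ∃ g ∈ dComp (dComp G), ∀ h ∈ G, h ≤ g)
    (f u : F) (hf : 0 ≤ f) (hu : 0 ≤ u) :
    ∃ f₁ : F, 0 ≤ f₁ ∧ f₁ ≤ f ∧ (∀ c : F, |c| ⊓ u = 0 → |c| ⊓ f₁ = 0) ∧
      (f - f₁) ⊓ u = 0 := by
  -- the even and odd disjoint families
  have hwe : ∀ k j : ℕ, k ≠ j → wfn f u (2 * k) ⊓ wfn f u (2 * j) = 0 := by
    intro k j hkj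
    refine wfn_disj' hu _ _ ?_
    rcases Nat.lt_or_ge k j with h | h
    · left; omega
    · right; omega
  have hwo : ∀ k j : ℕ, k ≠ j → wfn f u (2 * k + 1) ⊓ wfn f u (2 * j + 1) = 0 := by
    intro k j hkj
    refine wfn_disj' hu _ _ ?_
    rcases Nat.lt_or_ge k j with h | h
    · left; omega
    · right; omega
  obtain ⟨a₀, ha₀mem, ha₀dom⟩ := hyp (Set.range fun k => wfn f u (2 * k))
    (by rintro x ⟨k, rfl⟩; exact wfn_nonneg hu _)
    ⟨f + u, by rintro x ⟨k, rfl⟩; exact wfn_le hf hu _⟩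
    (by
      rintro x ⟨k, rfl⟩ y ⟨j, rfl⟩ hxy
      exact hwe k j (by rintro rfl; exact hxy rfl))
  obtain ⟨b₀, hb₀mem, hb₀dom⟩ := hyp (Set.range fun k => wfn f u (2 * k + 1))
    (by rintro x ⟨k, rfl⟩; exact wfn_nonneg hu _)
    ⟨f + u, by rintro x ⟨k, rfl⟩; exact wfn_le hf hu _⟩
    (by
      rintro x ⟨k, rfl⟩ y ⟨j, rfl⟩ hxy
      exact hwo k j (by rintro rfl; exact hxy rfl))
  set a : F := a₀ ⊔ 0 with ha_def
  set b : F := b₀ ⊔ 0 with hb_def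
  have ha0 : 0 ≤ a := le_sup_right
  have hb0 : 0 ≤ b := le_sup_right
  have hadom : ∀ k : ℕ, wfn f u (2 * k) ≤ a :=
    fun k => (ha₀dom _ ⟨k, rfl⟩).trans le_sup_left
  have hbdom : ∀ k : ℕ, wfn f u (2 * k + 1) ≤ b :=
    fun k => (hb₀dom _ ⟨k, rfl⟩).trans le_sup_left
  -- both dominators lie in the band generated by u
  have hband : ∀ (c : F), |c| ⊓ u = 0 →
      ∀ (x₀ : F) (S : Set F), (∀ s ∈ S, ∃ N : ℕ, 0 ≤ s ∧ s ≤ N • u) →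
      x₀ ∈ dComp (dComp S) → |c| ⊓ (x₀ ⊔ 0) = 0 := by
    intro c hc x₀ S hS hx₀
    have hcS : c ∈ dComp S := by
      intro s hs
      obtain ⟨N, hs0, hsN⟩ := hS s hs
      rw [abs_of_nonneg hs0]
      refine le_antisymm ?_ (inf_nonneg'' (abs_nonneg c) hs0)
      calc |c| ⊓ s ≤ |c| ⊓ (N • u) := inf_le_inf_left _ hsN
        _ = (N • u) ⊓ |c| := inf_comm ..
        _ ≤ N • (u ⊓ |c|) := nsmul_inf_le _ hu (abs_nonneg c)
        _ = 0 := by rw [inf_comm, hc, smul_zero]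
    have h2 : |x₀| ⊓ |c| = 0 := hx₀ c hcS
    have h3 : x₀ ⊔ 0 ≤ |x₀| := sup_le (le_abs_self x₀) (abs_nonneg x₀)
    refine le_antisymm ?_ (inf_nonneg'' (abs_nonneg c) le_sup_right)
    calc |c| ⊓ (x₀ ⊔ 0) ≤ |c| ⊓ |x₀| := inf_le_inf_left _ h3
      _ = 0 := by rw [inf_comm]; exact h2
  have haband : ∀ c : F, |c| ⊓ u = 0 → |c| ⊓ a = 0 := by
    intro c hc
    refine hband c hc a₀ _ ?_ ha₀mem
    rintro s ⟨k, rfl⟩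
    exact ⟨2 * k + 1, wfn_nonneg hu _, nsmul_le_nsmul_right (efn_le_u hu _) _⟩
  have hbband : ∀ c : F, |c| ⊓ u = 0 → |c| ⊓ b = 0 := by
    intro c hc
    refine hband c hc b₀ _ ?_ hb₀mem
    rintro s ⟨k, rfl⟩
    exact ⟨2 * k + 1 + 1, wfn_nonneg hu _, nsmul_le_nsmul_right (efn_le_u hu _) _⟩
  -- the dominators bound all partial sums
  have habdom : ∀ m : ℕ, (∑ n ∈ Finset.range m, wfn f u n) ≤ a + b := by
    intro m
    have heven : (∑ k ∈ Finset.range m, wfn f u (2 * k)) ≤ a :=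
      sum_le_dom (fun k => wfn_nonneg hu _) (fun k j hkj => hwe k j hkj) hadom m
    have hodd : (∑ k ∈ Finset.range m, wfn f u (2 * k + 1)) ≤ b :=
      sum_le_dom (fun k => wfn_nonneg hu _) (fun k j hkj => hwo k j hkj) hbdom m
    calc (∑ n ∈ Finset.range m, wfn f u n)
        ≤ ∑ n ∈ Finset.range (2 * m), wfn f u n :=
          sum_range_mono (fun n => wfn_nonneg hu n) (by omega)
      _ = (∑ k ∈ Finset.range m, wfn f u (2 * k))
          + (∑ k ∈ Finset.range m, wfn f u (2 * k + 1)) := sum_split_parity _ m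
      _ ≤ a + b := add_le_add heven hodd
  set v : F := a + b with hv_def
  have hv0 : 0 ≤ v := add_nonneg ha0 hb0
  refine ⟨f ⊓ v, le_inf hf hv0, inf_le_left, ?_, ?_⟩
  · -- band membership
    intro c hc
    have h1 : a ⊓ |c| = 0 := disj_comm' (haband c hc)
    have h2 : b ⊓ |c| = 0 := disj_comm' (hbband c hc)
    refine le_antisymm ?_ (inf_nonneg'' (abs_nonneg c) (le_inf hf hv0))
    calc |c| ⊓ (f ⊓ v) ≤ |c| ⊓ v := inf_le_inf_left _ inf_le_right
      _ = v ⊓ |c| := inf_comm ..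
      _ ≤ a ⊓ |c| + b ⊓ |c| := add_inf_le ha0 hb0 (abs_nonneg c)
      _ = 0 := by rw [h1, h2, add_zero]
  · -- the residual is disjoint from u
    have hf2 : f - f ⊓ v = (f - v) ⊔ 0 := self_sub_inf f v
    have ht0 : 0 ≤ (f - f ⊓ v) ⊓ u := inf_nonneg'' (by rw [hf2]; exact le_sup_right) hu
    set t : F := (f - f ⊓ v) ⊓ u with ht_def
    have htle : ∀ m : ℕ, t ≤ (m + 1) • dfn f u m := by
      intro m
      have h3 : f - v ≤ f - ∑ n ∈ Finset.range m, wfn f u n := sub_le_sub_left (habdom m) f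
      have h5 : (∑ n ∈ Finset.range m, wfn f u n) = pfn f u m - m • dfn f u m := by
        rw [← sum_wfn hf hu m]; abel
      have h6 : f - (pfn f u m - m • dfn f u m) = (f - pfn f u m) + m • dfn f u m := by
        abel
      have h1 : f - v ≤ zfn f u m + m • dfn f u m := by
        refine h3.trans (le_of_eq ?_)
        rw [h5, h6, f_sub_pfn]
      have h7 : f - f ⊓ v ≤ zfn f u m + m • dfn f u m := by
        rw [hf2]
        exact sup_le h1 (add_nonneg (zfn_nonneg m) (nsmul_nonneg (dfn_nonneg hu m) m))
      calc t ≤ (zfn f u m + m • dfn f u m) ⊓ u := inf_le_inf_right u h7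
        _ ≤ zfn f u m ⊓ u + (m • dfn f u m) ⊓ u :=
            add_inf_le (zfn_nonneg m) (nsmul_nonneg (dfn_nonneg hu m) m) hu
        _ ≤ dfn f u m + m • dfn f u m := add_le_add (zfn_inf_u_le_dfn hu m) inf_le_left
        _ = (m + 1) • dfn f u m := by rw [succ_nsmul, add_comm]
    have harch : ∀ n : ℕ, n • t ≤ f := by
      intro n
      cases n with
      | zero => simpa using hf
      | succ n =>
          have h1 : t ≤ (n + 1 + 1) • dfn f u (n + 1) := htle (n + 1)
          have h2 : (n + 1) • t ≤ ((n + 1 + 1) * (n + 1)) • zfn f u (n + 1) := by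
            calc (n + 1) • t ≤ (n + 1) • ((n + 1 + 1) • dfn f u (n + 1)) :=
                nsmul_le_nsmul_right h1 (n + 1)
              _ = ((n + 1 + 1) * (n + 1)) • dfn f u (n + 1) := (mul_nsmul _ _ _).symm
              _ ≤ ((n + 1 + 1) * (n + 1)) • zfn f u (n + 1) :=
                nsmul_le_nsmul_right (dfn_le_zfn (n + 1)) _
          have h3 : (n + 1) • t ≤ (n + 1) • u :=
            nsmul_le_nsmul_right inf_le_right (n + 1)
          have h4 : (n + 1) • t
              ≤ (((n + 1 + 1) * (n + 1)) • ((f - (n + 1) • u) ⊔ 0)) ⊓ ((n + 1) • u) :=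
            le_inf h2 h3
          exact h4.trans (key_inf hf (nsmul_nonneg hu (n + 1)) _)
    exact le_antisymm (hArch f t hf harch) ht0

/-- Forward direction: the projection property gives dominating elements. -/
lemma dom_of_pp
    (hpp : ∀ E : Set F, IsIdeal E → E = dComp (dComp E) → E + dComp E = Set.univ) :
    ∀ G : Set F, G ⊆ {x : F | 0 ≤ x} → (∃ f : F, ∀ g ∈ G, g ≤ f) →
      (∀ g ∈ G, ∀ h ∈ G, g ≠ h → g ⊓ h = 0) →
      ∃ g ∈ dComp (dComp G), ∀ h ∈ G, h ≤ g := by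
  intro G hGpos hGb _hGd
  obtain ⟨f₀, hf₀⟩ := hGb
  set E : Set F := dComp (dComp G) with hE_def
  have hEE : E = dComp (dComp E) := by
    rw [hE_def, dComp_dComp_dComp]
  have huniv := hpp E (isIdeal_dComp _) hEE
  have hf₀mem : f₀ ∈ E + dComp E := by rw [huniv]; trivial
  obtain ⟨x, hx, y, hy, hxy⟩ := Set.mem_add.mp hf₀mem
  refine ⟨x, hx, ?_⟩
  intro g hg
  obtain ⟨hE0, hEadd, hEsmul, hEsolid⟩ := isIdeal_dComp (F := F) (dComp G)
  have hgE : g ∈ E := subset_dComp_dComp G hg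
  have hgx : g - x ∈ E := by
    have : g - x = g + (-1 : ℝ) • x := by rw [neg_one_smul]; abel
    rw [this]
    exact hEadd _ _ hgE (hEsmul _ _ hx)
  set q : F := (g - x) ⊔ 0 with hq_def
  have hq0 : 0 ≤ q := le_sup_right
  have hqE : q ∈ E := by
    refine hEsolid.2 q (g - x) hgx ?_
    rw [abs_of_nonneg hq0]
    exact sup_le (le_abs_self _) (abs_nonneg _)
  have hqy : q ≤ |y| := by
    have h1 : g - x ≤ y := by
      have := hf₀ g hg
      rw [← hxy] at this
      exact sub_le_iff_le_add'.mpr this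
    exact sup_le (h1.trans (le_abs_self y)) (abs_nonneg y)
  have hqy0 : |y| ⊓ |q| = 0 := hy q hqE
  have hq_eq : q = 0 := by
    have h2 : q ⊓ |y| = q := inf_eq_left.mpr hqy
    rw [abs_of_nonneg hq0] at hqy0
    rw [← h2, inf_comm]
    exact hqy0
  have : g - x ≤ 0 := posPart_eq_zero.mp hq_eq
  exact sub_nonpos.mp this

/-- Backward direction: dominating elements for disjoint families give
the projection property. -/
lemma pp_of_hyp (hArch : ∀ f g : F, 0 ≤ f → (∀ n : ℕ, n • g ≤ f) → g ≤ 0)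
    (hyp : ∀ G : Set F, G ⊆ {x : F | 0 ≤ x} → (∃ f : F, ∀ g ∈ G, g ≤ f) →
      (∀ g ∈ G, ∀ h ∈ G, g ≠ h → g ⊓ h = 0) →
      ∃ g ∈ dComp (dComp G), ∀ h ∈ G, h ≤ g) :
    ∀ E : Set F, IsIdeal E → E = dComp (dComp E) → E + dComp E = Set.univ := by
  intro E hIdeal hEdd
  obtain ⟨hE0, hEadd, hEsmul, hEsolid⟩ := hIdeal
  have hEneg : ∀ x ∈ E, -x ∈ E := by
    intro x hx
    have : -x = (-1 : ℝ) • x := (neg_one_smul ℝ x).symm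
    rw [this]
    exact hEsmul _ _ hx
  -- decomposition of nonnegative elements
  have hposdec : ∀ f : F, 0 ≤ f → ∃ x ∈ E, ∃ y ∈ dComp E, x + y = f := by
    intro f hf
    -- maximal disjoint family in E ∩ (0, f]
    set T : Set F := {w : F | w ∈ E ∧ 0 < w ∧ w ≤ f} with hT_def
    set 𝒮 : Set (Set F) := {G : Set F | G ⊆ T ∧ G.Pairwise fun g h => g ⊓ h = 0}
      with h𝒮_def
    obtain ⟨G, hGmax⟩ := zorn_subset 𝒮 (by
      intro c hc hchain
      refine ⟨⋃₀ c, ⟨?_, ?_⟩, fun s hs => Set.subset_sUnion_of_mem hs⟩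
      · intro x hx
        obtain ⟨s, hs, hxs⟩ := hx
        exact (hc hs).1 hxs
      · intro x hx y hy hxy
        obtain ⟨s, hs, hxs⟩ := hx
        obtain ⟨s', hs', hys⟩ := hy
        rcases hchain.total hs hs' with h | h
        · exact (hc hs').2 (h hxs) hys hxy
        · exact (hc hs).2 hxs (h hys) hxy)
    have hG𝒮 : G ∈ 𝒮 := hGmax.1
    have hGT : G ⊆ T := hG𝒮.1
    have hGpair : G.Pairwise fun g h => g ⊓ h = 0 := hG𝒮.2
    -- components of f in the principal bands of elements of G
    have hcomp : ∀ g : F, ∃ hg : F, 0 ≤ g →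
        0 ≤ hg ∧ hg ≤ f ∧ (∀ c : F, |c| ⊓ g = 0 → |c| ⊓ hg = 0) ∧ (f - hg) ⊓ g = 0 := by
      intro g
      by_cases h : 0 ≤ g
      · obtain ⟨f₁, h1, h2, h3, h4⟩ := ppp hArch hyp f g hf h
        exact ⟨f₁, fun _ => ⟨h1, h2, h3, h4⟩⟩
      · exact ⟨0, fun h' => absurd h' h⟩
    choose comp hcompp using hcomp
    have hGc : ∀ g ∈ G, 0 ≤ g := fun g hg => le_of_lt (hGT hg).2.1
    set H : Set F := comp '' G with hH_def
    obtain ⟨u₀, hu₀mem, hu₀dom⟩ := hyp H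
      (by
        rintro x ⟨g, hg, rfl⟩
        exact (hcompp g (hGc g hg)).1)
      ⟨f, by rintro x ⟨g, hg, rfl⟩; exact (hcompp g (hGc g hg)).2.1⟩
      (by
        rintro x ⟨g, hg, rfl⟩ y ⟨g', hg', rfl⟩ hxy
        have hgg' : g ≠ g' := by rintro rfl; exact hxy rfl
        have hd : g ⊓ g' = 0 := hGpair hg hg' hgg'
        have h1 : |g| ⊓ g' = 0 := by rw [abs_of_nonneg (hGc g hg)]; exact hd
        have h2 : |g| ⊓ comp g' = 0 := (hcompp g' (hGc g' hg')).2.2.1 g h1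
        have h3 : |comp g'| ⊓ g = 0 := by
          rw [abs_of_nonneg (hcompp g' (hGc g' hg')).1, inf_comm]
          rw [abs_of_nonneg (hGc g hg)] at h2
          exact h2
        have h4 : |comp g'| ⊓ comp g = 0 := (hcompp g (hGc g hg)).2.2.1 _ h3
        rw [abs_of_nonneg (hcompp g' (hGc g' hg')).1] at h4
        rw [inf_comm]
        exact h4)
    set u : F := u₀ ⊔ 0 with hu_def
    have hu0 : 0 ≤ u := le_sup_right
    have hudom : ∀ g ∈ G, comp g ≤ u := fun g hg =>
      (hu₀dom _ ⟨g, hg, rfl⟩).trans le_sup_left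
    -- u belongs to the band E
    have hHE : H ⊆ dComp (dComp E) := by
      rintro x ⟨g, hg, rfl⟩
      intro c hc
      have h1 : |c| ⊓ |g| = 0 := hc g ((hGT hg).1)
      rw [abs_of_nonneg (hGc g hg)] at h1
      have h2 : |c| ⊓ comp g = 0 := (hcompp g (hGc g hg)).2.2.1 c h1
      rw [abs_of_nonneg (hcompp g (hGc g hg)).1, inf_comm]
      exact h2
    have hHE' : H ⊆ E := by rw [hEdd]; exact hHE
    have hu₀E : u₀ ∈ E := by
      rw [hEdd]
      exact (dComp_antitone (dComp_antitone hHE')) hu₀mem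
    have huE : u ∈ E := by
      refine hEsolid.2 u u₀ hu₀E ?_
      rw [abs_of_nonneg hu0]
      exact sup_le (le_abs_self _) (abs_nonneg _)
    -- the decomposition
    set x : F := f ⊓ u with hx_def
    have hx0 : 0 ≤ x := le_inf hf hu0
    have hxE : x ∈ E := by
      refine hEsolid.2 x u huE ?_
      rw [abs_of_nonneg hx0]
      exact inf_le_right.trans (le_abs_self u)
    have hyeq : f - x = (f - u) ⊔ 0 := self_sub_inf f u
    have hy0 : 0 ≤ f - x := by rw [hyeq]; exact le_sup_right
    have hyf : f - x ≤ f := by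
      rw [hyeq]
      exact sup_le (sub_le_self f hu0) hf
    have hydComp : f - x ∈ dComp E := by
      intro c hc
      rw [abs_of_nonneg hy0]
      set dd : F := (f - x) ⊓ |c| with hdd_def
      have hdd0 : 0 ≤ dd := inf_nonneg'' hy0 (abs_nonneg c)
      have hddE : dd ∈ E := by
        refine hEsolid.2 dd c hc ?_
        rw [abs_of_nonneg hdd0]
        exact inf_le_right
      have hddf : dd ≤ f := inf_le_left.trans hyf
      have hdd_zero : dd = 0 := by
        by_contra hne
        have hddpos : 0 < dd := lt_of_le_of_ne hdd0 (Ne.symm hne)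
        by_cases hcase : ∀ g ∈ G, dd ⊓ g = 0
        · -- contradicts maximality of G
          have hins : insert dd G ∈ 𝒮 := by
            constructor
            · intro z hz
              rcases hz with rfl | hz
              · exact ⟨hddE, hddpos, hddf⟩
              · exact hGT hz
            · refine hGpair.insert ?_
              intro g hg hgd
              exact ⟨hcase g hg, disj_comm' (hcase g hg)⟩
          have hsub : insert dd G ⊆ G := hGmax.2 hins (Set.subset_insert dd G)
          have : dd ∈ G := hsub (Set.mem_insert dd G)
          have := hcase dd this
          rw [inf_idem] at this
          exact hne this
        · push_neg at hcase
          obtain ⟨g, hg, hdg⟩ := hcase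
          have h1 : dd ⊓ g ≤ (f - comp g) ⊓ g := by
            refine inf_le_inf_right g ?_
            refine inf_le_left.trans ?_
            rw [hyeq]
            refine sup_le ?_ (sub_nonneg.mpr (hcompp g (hGc g hg)).2.1)
            exact sub_le_sub_left (hudom g hg) f
          have h2 : (f - comp g) ⊓ g = 0 := by
            have h3 := (hcompp g (hGc g hg)).2.2.2
            have h4 : (f - comp g) ⊓ g ≤ (f - comp g) ⊓ |g| := by
              rw [abs_of_nonneg (hGc g hg)]
            exact h3
          have h5 : 0 ≤ dd ⊓ g := inf_nonneg'' hdd0 (hGc g hg)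
          exact hdg (le_antisymm (h1.trans_eq h2) h5)
      exact hdd_zero
    exact ⟨x, hxE, f - x, hydComp, by abel⟩
  -- general decomposition
  have hdec : ∀ f : F, ∃ x ∈ E, ∃ y ∈ dComp E, x + y = f := by
    intro f
    obtain ⟨x₁, hx₁, y₁, hy₁, hxy₁⟩ := hposdec (f ⊔ 0) le_sup_right
    obtain ⟨x₂, hx₂, y₂, hy₂, hxy₂⟩ := hposdec ((-f) ⊔ 0) le_sup_right
    refine ⟨x₁ - x₂, ?_, y₁ - y₂, dComp_sub_mem hy₁ hy₂, ?_⟩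
    · have : x₁ - x₂ = x₁ + (-x₂) := sub_eq_add_neg x₁ x₂
      rw [this]
      exact hEadd _ _ hx₁ (hEneg _ hx₂)
    · have hpn : (f ⊔ 0) - ((-f) ⊔ 0) = f := by
        have h1 : f⁺ - f⁻ = f := posPart_sub_negPart f
        exact h1
      calc x₁ - x₂ + (y₁ - y₂) = (x₁ + y₁) - (x₂ + y₂) := by abel
        _ = (f ⊔ 0) - ((-f) ⊔ 0) := by rw [hxy₁, hxy₂]
        _ = f := hpn
  rw [Set.eq_univ_iff_forall]
  intro f
  obtain ⟨x, hx, y, hy, hxy⟩ := hdec f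
  exact Set.mem_add.mpr ⟨x, hx, y, hy, hxy⟩

/-- Existence of suprema of bounded disjoint families gives the domination property. -/
lemma dom_of_sup
    (hsup : ∀ G : Set F, G ⊆ {x : F | 0 ≤ x} → (∃ f : F, ∀ g ∈ G, g ≤ f) →
      (∀ g ∈ G, ∀ h ∈ G, g ≠ h → g ⊓ h = 0) → ∃ s : F, IsLUB G s) :
    ∀ G : Set F, G ⊆ {x : F | 0 ≤ x} → (∃ f : F, ∀ g ∈ G, g ≤ f) →
      (∀ g ∈ G, ∀ h ∈ G, g ≠ h → g ⊓ h = 0) →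
      ∃ g ∈ dComp (dComp G), ∀ h ∈ G, h ≤ g := by
  intro G hGpos hGb hGd
  by_cases hne : G.Nonempty
  · obtain ⟨s, hs⟩ := hsup G hGpos hGb hGd
    refine ⟨s, ?_, fun h hh => hs.1 hh⟩
    intro h hh
    obtain ⟨g₀, hg₀⟩ := hne
    have hs0 : 0 ≤ s := le_trans (hGpos hg₀) (hs.1 hg₀)
    set v : F := |h| with hv_def
    have hv0 : 0 ≤ v := abs_nonneg h
    have hgv : ∀ g ∈ G, g ⊓ v = 0 := by
      intro g hg
      have h1 := hh g hg
      rw [abs_of_nonneg (hGpos hg)] at h1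
      rw [inf_comm]
      exact h1
    have hgsum : ∀ g ∈ G, g + v = g ⊔ v := by
      intro g hg
      have := inf_add_sup g v
      rw [hgv g hg, zero_add] at this
      exact this.symm
    have l1 : IsLUB ((fun g => g + v) '' G) (s + v) := by
      constructor
      · rintro x ⟨g, hg, rfl⟩
        exact add_le_add_left (hs.1 hg) v
      · intro w hw
        have hub : s ≤ w - v := by
          refine hs.2 ?_
          intro g hg
          have := hw ⟨g, hg, rfl⟩
          exact le_sub_iff_add_le.mpr this
        exact add_le_of_le_sub_right hub
    have l2 : IsLUB ((fun g => g + v) '' G) (s ⊔ v) := by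
      constructor
      · rintro x ⟨g, hg, rfl⟩
        show g + v ≤ s ⊔ v
        rw [hgsum g hg]
        exact sup_le_sup_right (hs.1 hg) v
      · intro w hw
        have hwg : ∀ g ∈ G, g ⊔ v ≤ w := by
          intro g hg
          rw [← hgsum g hg]
          exact hw ⟨g, hg, rfl⟩
        have hws : s ≤ w := hs.2 fun g hg => le_sup_left.trans (hwg g hg)
        have hwv : v ≤ w := le_sup_right.trans (hwg g₀ hg₀)
        exact sup_le hws hwv
    have heq : s + v = s ⊔ v := l1.unique l2
    have hsv : s ⊓ v = 0 := by
      have h6 := inf_add_sup s v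
      rw [← heq] at h6
      have h7 : s ⊓ v + (s + v) = 0 + (s + v) := by rw [zero_add]; exact h6
      exact add_right_cancel h7
    rw [abs_of_nonneg hs0]
    exact hsv
  · rw [Set.not_nonempty_iff_eq_empty] at hne
    subst hne
    refine ⟨0, ?_, fun h hh => absurd hh (Set.notMem_empty h)⟩
    intro g _
    rw [abs_zero]
    exact inf_eq_left.mpr (abs_nonneg g)

end Stmt14Aux

/-- An Archimedean vector lattice has the projection property iff for every order
bounded disjoint set `G ⊆ F⁺` there is `g ∈ G^{dd}` dominating `G`; in particular,
disjoint completeness implies the projection property. -/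
theorem stmt14 (hArch : ∀ f g : F, 0 ≤ f → (∀ n : ℕ, n • g ≤ f) → g ≤ 0) :
    ((∀ E : Set F, IsIdeal E → E = dComp (dComp E) → E + dComp E = Set.univ) ↔
      (∀ G : Set F, G ⊆ {x : F | 0 ≤ x} → (∃ f : F, ∀ g ∈ G, g ≤ f) →
        (∀ g ∈ G, ∀ h ∈ G, g ≠ h → g ⊓ h = 0) →
        ∃ g ∈ dComp (dComp G), ∀ h ∈ G, h ≤ g)) ∧
    ((∀ G : Set F, G ⊆ {x : F | 0 ≤ x} → (∃ f : F, ∀ g ∈ G, g ≤ f) →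
        (∀ g ∈ G, ∀ h ∈ G, g ≠ h → g ⊓ h = 0) → ∃ s : F, IsLUB G s) →
      ∀ E : Set F, IsIdeal E → E = dComp (dComp E) → E + dComp E = Set.univ) := by
  constructor
  · constructor
    · exact fun hpp => Stmt14Aux.dom_of_pp hpp
    · exact fun hyp => Stmt14Aux.pp_of_hyp hArch hyp
  · exact fun hsup => Stmt14Aux.pp_of_hyp hArch (Stmt14Aux.dom_of_sup hsup)
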